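/- Let r ≥ 1 and d ≥ 3 be integers, suppose G : [0,1] → [0,1] satisfies G(x) = ∫_x^1 (1 − G(t)^r)^{d−1} dt for all x ∈ [0,1], and define G̃(x) = ∫_x^1 (1 − G(t)^r)^d dt. Then G̃(x) = G(x) − G(x)^{r+1}/(r+1) for all x ∈ [0,1]. -/

import Mathlib

open MeasureTheory intervalIntegral Set

theorem Gtilde_formula (r d : ℕ) (hr : 1 ≤ r) (hd : 3 ≤ d)
    (G : ℝ → ℝ)
    (hrange : ∀ x ∈ Set.Icc (0 : ℝ) 1, G x ∈ Set.Icc (0 : ℝ) 1)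
    (hG : ∀ x ∈ Set.Icc (0 : ℝ) 1, G x = ∫ t in x..(1 : ℝ), (1 - G t ^ r) ^ (d - 1)) :
    ∀ x ∈ Set.Icc (0 : ℝ) 1,
      (∫ t in x..(1 : ℝ), (1 - G t ^ r) ^ d) = G x - G x ^ (r + 1) / (r + 1) := by
  set f : ℝ → ℝ := fun t => (1 - G t ^ r) ^ (d - 1) with hf_def
  -- basic bounds
  have hfb : ∀ t ∈ Icc (0:ℝ) 1, f t ∈ Icc (0:ℝ) 1 := by
    intro t ht
    obtain ⟨h0, h1⟩ := hrange t ht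
    have hp0 : (0:ℝ) ≤ G t ^ r := pow_nonneg h0 r
    have hp1 : G t ^ r ≤ 1 := pow_le_one₀ h0 h1
    exact ⟨pow_nonneg (by linarith) _, pow_le_one₀ (by linarith) (by linarith)⟩
  -- the set of x in [0,1] where f is interval-integrable on [x,1]
  set T : Set ℝ := {x | x ∈ Icc (0:ℝ) 1 ∧ IntervalIntegrable f volume x 1} with hT_def
  have hup : ∀ x ∈ T, ∀ y, x ≤ y → y ≤ 1 → y ∈ T := by
    intro x hx y hxy hy1
    refine ⟨⟨le_trans hx.1.1 hxy, hy1⟩, hx.2.mono_set ?_⟩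
    rw [uIcc_of_le hy1, uIcc_of_le hx.1.2]
    exact Icc_subset_Icc hxy le_rfl
  have h1T : (1:ℝ) ∈ T := ⟨⟨zero_le_one, le_rfl⟩, IntervalIntegrable.refl⟩
  have hane : T.Nonempty := ⟨1, h1T⟩
  have hbdd : BddBelow T := ⟨0, fun x hx => hx.1.1⟩
  -- Lipschitz estimate on T
  have hLip' : ∀ x ∈ T, ∀ y ∈ T, x ≤ y → |G x - G y| ≤ |x - y| := by
    intro x hx y hy hxy
    have hxy' : IntervalIntegrable f volume x y := by
      refine hx.2.mono_set ?_
      rw [uIcc_of_le hxy, uIcc_of_le hx.1.2]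
      exact Icc_subset_Icc le_rfl hy.1.2
    have hadd : (∫ t in x..y, f t) + (∫ t in y..1, f t) = ∫ t in x..1, f t :=
      integral_add_adjacent_intervals hxy' hy.2
    have hGxy : G x - G y = ∫ t in x..y, f t := by
      rw [hG x hx.1, hG y hy.1, ← hadd]; ring
    rw [hGxy]
    have := intervalIntegral.norm_integral_le_of_norm_le_const (C := 1) (f := f) (a := x) (b := y)
      (fun t ht => by
        rw [uIoc_of_le hxy] at ht
        have ht' : t ∈ Icc (0:ℝ) 1 := ⟨le_trans hx.1.1 ht.1.le, le_trans ht.2 hy.1.2⟩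
        have := hfb t ht'
        rw [Real.norm_eq_abs, abs_le]
        exact ⟨by linarith [this.1], this.2⟩)
    rw [Real.norm_eq_abs] at this
    calc |∫ t in x..y, f t| ≤ 1 * |y - x| := this
    _ = |x - y| := by rw [one_mul, abs_sub_comm]
  have hLip : ∀ x ∈ T, ∀ y ∈ T, |G x - G y| ≤ |x - y| := by
    intro x hx y hy
    rcases le_total x y with h | h
    · exact hLip' x hx y hy h
    · rw [abs_sub_comm (G x), abs_sub_comm x]; exact hLip' y hy x hx h
  set a := sInf T with ha_def
  have ha0 : 0 ≤ a := le_csInf hane fun x hx => hx.1.1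
  have ha1 : a ≤ 1 := csInf_le hbdd h1T
  have hIocT : Ioc a 1 ⊆ T := by
    intro y hy
    obtain ⟨z, hz, hzy⟩ := exists_lt_of_csInf_lt hane hy.1
    exact hup z hz y hzy.le hy.2
  have hIco : ∀ x ∈ Ico (0:ℝ) a, f x = 1 := by
    intro x hx
    have hx1 : x ∈ Icc (0:ℝ) 1 := ⟨hx.1, le_trans hx.2.le ha1⟩
    have hxT : x ∉ T := fun h => absurd (csInf_le hbdd h) (not_le.mpr hx.2)
    have hni : ¬IntervalIntegrable f volume x 1 := fun h => hxT ⟨hx1, h⟩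
    have hGx : G x = 0 := by rw [hG x hx1, intervalIntegral.integral_undef hni]
    simp only [hf_def, hGx]
    rw [zero_pow (by omega : r ≠ 0)]
    simp
  -- f is integrable on (0,1]
  have hGcontIoc : ContinuousOn G (Ioc a 1) := by
    have : LipschitzOnWith 1 G (Ioc a 1) := by
      rw [lipschitzOnWith_iff_dist_le_mul]
      intro x hx y hy
      rw [Real.dist_eq, Real.dist_eq, NNReal.coe_one, one_mul]
      exact hLip x (hIocT hx) y (hIocT hy)
    exact this.continuousOn
  have hfcontIoc : ContinuousOn f (Ioc a 1) :=
    ((continuousOn_const.sub (hGcontIoc.pow r)).pow (d - 1))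
  have hInt1 : IntegrableOn f (Ioc a 1) volume := by
    have hm : AEStronglyMeasurable f (volume.restrict (Ioc a 1)) :=
      hfcontIoc.aestronglyMeasurable measurableSet_Ioc
    refine Integrable.mono' (g := fun _ => (1:ℝ))
      ((integrableOn_const_iff (C := (1:ℝ))).mpr (Or.inr measure_Ioc_lt_top)) hm ?_
    refine (ae_restrict_iff' measurableSet_Ioc).mpr (Filter.Eventually.of_forall fun t ht => ?_)
    have ht' : t ∈ Icc (0:ℝ) 1 := ⟨le_trans ha0 ht.1.le, ht.2⟩
    have := hfb t ht'
    show ‖f t‖ ≤ 1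
    rw [Real.norm_eq_abs, abs_le]
    exact ⟨by linarith [this.1], this.2⟩
  have hInt2 : IntegrableOn f (Ico 0 a) volume := by
    refine Integrable.congr (g := f) (f := fun _ => (1:ℝ))
      ((integrableOn_const_iff (C := (1:ℝ))).mpr (Or.inr measure_Ico_lt_top)) ?_
    exact (ae_restrict_iff' measurableSet_Ico).mpr
      (Filter.Eventually.of_forall fun t ht => (hIco t ht).symm)
  have hsing : IntegrableOn f {a} volume := by
    rw [IntegrableOn, Measure.restrict_singleton]
    simp
  have hInt : IntegrableOn f (Ioc 0 1) volume := by
    refine ((hInt2.union hsing).union hInt1).mono_set ?_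
    intro t ht
    rcases lt_trichotomy t a with h | h | h
    · exact Or.inl (Or.inl ⟨ht.1.le, h⟩)
    · exact Or.inl (Or.inr (by simp [h]))
    · exact Or.inr ⟨h, ht.2⟩
  have h01 : IntervalIntegrable f volume 0 1 :=
    (intervalIntegrable_iff_integrableOn_Ioc_of_le zero_le_one).mpr hInt
  have hallT : ∀ x ∈ Icc (0:ℝ) 1, x ∈ T := fun x hx =>
    hup 0 ⟨⟨le_rfl, zero_le_one⟩, h01⟩ x hx.1 hx.2
  -- G and f are continuous on [0,1]
  have hGcont : ContinuousOn G (Icc 0 1) := by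
    have : LipschitzOnWith 1 G (Icc 0 1) := by
      rw [lipschitzOnWith_iff_dist_le_mul]
      intro x hx y hy
      rw [Real.dist_eq, Real.dist_eq, NNReal.coe_one, one_mul]
      exact hLip x (hallT x hx) y (hallT y hy)
    exact this.continuousOn
  -- the clamping map
  set proj : ℝ → ℝ := fun t => max 0 (min 1 t) with hproj_def
  have hprojc : Continuous proj := continuous_const.max (continuous_const.min continuous_id)
  have hprojmem : ∀ t, proj t ∈ Icc (0:ℝ) 1 :=
    fun t => ⟨le_max_left _ _, max_le zero_le_one (min_le_left _ _)⟩
  have hprojeq : ∀ t ∈ Icc (0:ℝ) 1, proj t = t := fun t ht => by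
    simp only [hproj_def]
    rw [min_eq_right ht.2, max_eq_right ht.1]
  -- continuous extensions of the integrands
  set F : ℝ → ℝ := fun t => (1 - G (proj t) ^ r) ^ (d - 1) with hF_def
  set Gg : ℝ → ℝ := fun t => (1 - G (proj t) ^ r) ^ d with hGg_def
  have hGP : Continuous fun t => G (proj t) :=
    hGcont.comp_continuous hprojc hprojmem
  have hFc : Continuous F := (continuous_const.sub (hGP.pow r)).pow (d - 1)
  have hGgc : Continuous Gg := (continuous_const.sub (hGP.pow r)).pow d
  set H : ℝ → ℝ := fun y => ∫ t in y..(1:ℝ), F t with hH_def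
  set K : ℝ → ℝ := fun y => ∫ t in y..(1:ℝ), Gg t with hK_def
  have hFeq : ∀ t ∈ Icc (0:ℝ) 1, F t = f t := fun t ht => by
    simp only [hF_def, hf_def, hprojeq t ht]
  have hHG : ∀ y ∈ Icc (0:ℝ) 1, H y = G y := by
    intro y hy
    have : H y = ∫ t in y..(1:ℝ), f t := by
      refine intervalIntegral.integral_congr fun t ht => ?_
      rw [uIcc_of_le hy.2] at ht
      exact hFeq t ⟨le_trans hy.1 ht.1, ht.2⟩
    rw [this, ← hG y hy]
  have hKg : ∀ y ∈ Icc (0:ℝ) 1, K y = ∫ t in y..(1:ℝ), (1 - G t ^ r) ^ d := by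
    intro y hy
    refine intervalIntegral.integral_congr fun t ht => ?_
    rw [uIcc_of_le hy.2] at ht
    simp only [hGg_def, hprojeq t ⟨le_trans hy.1 ht.1, ht.2⟩]
  have hHd : ∀ y, HasDerivAt H (-(F y)) y := fun y =>
    intervalIntegral.integral_hasDerivAt_left (hFc.intervalIntegrable _ _)
      (hFc.stronglyMeasurable.stronglyMeasurableAtFilter) hFc.continuousAt
  have hKd : ∀ y, HasDerivAt K (-(Gg y)) y := fun y =>
    intervalIntegral.integral_hasDerivAt_left (hGgc.intervalIntegrable _ _)
      (hGgc.stronglyMeasurable.stronglyMeasurableAtFilter) hGgc.continuousAt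
  set Φ : ℝ → ℝ := fun z => K z - (H z - H z ^ (r + 1) / ((r:ℝ) + 1)) with hΦ_def
  have hΦd : ∀ y, HasDerivAt Φ
      (-(Gg y) - (-(F y) - ((↑(r+1) : ℝ) * H y ^ (r + 1 - 1) * (-(F y))) / ((r:ℝ) + 1))) y := by
    intro y
    exact (hKd y).sub ((hHd y).sub (((hHd y).pow (r+1)).div_const _))
  have hΦc : Continuous Φ := by
    rw [continuous_iff_continuousAt]
    exact fun y => (hΦd y).continuousAt
  have hΦ0 : ∀ y ∈ Ico (0:ℝ) 1, HasDerivAt Φ 0 y := by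
    intro y hy
    have hy' : y ∈ Icc (0:ℝ) 1 := ⟨hy.1, hy.2.le⟩
    have h := hΦd y
    have hHy : H y = G y := hHG y hy'
    have hFy : F y = (1 - G y ^ r) ^ (d - 1) := by
      simp only [hF_def, hprojeq y hy']
    have hGgy : Gg y = (1 - G y ^ r) ^ d := by
      simp only [hGg_def, hprojeq y hy']
    have hrne : ((r:ℝ) + 1) ≠ 0 := by positivity
    have hkey : -(Gg y) - (-(F y) - ((↑(r+1) : ℝ) * H y ^ (r + 1 - 1) * (-(F y))) / ((r:ℝ) + 1))
        = 0 := by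
      obtain ⟨e, hde⟩ : ∃ e, d = e + 1 := ⟨d - 1, by omega⟩
      rw [Nat.add_sub_cancel, hHy, hFy, hGgy, hde, Nat.add_sub_cancel, pow_succ]
      push_cast
      field_simp
      ring
    rwa [hkey] at h
  -- conclude
  intro x hx
  have hconst := constant_of_has_deriv_right_zero (a := x) (b := 1) hΦc.continuousOn
    (fun y hy => (hΦ0 y ⟨le_trans hx.1 hy.1, hy.2⟩).hasDerivWithinAt) 1 ⟨hx.2, le_rfl⟩
  have hΦ1 : Φ 1 = 0 := by
    simp only [hΦ_def, hH_def, hK_def, intervalIntegral.integral_same]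
    norm_num
  have hΦx : Φ x = 0 := by rw [← hconst, hΦ1]
  have := hΦx
  simp only [hΦ_def] at this
  have hKx := hKg x hx
  have hHx := hHG x hx
  rw [hKx, hHx] at this
  linarith
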